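/- Let m ∈ F_2[t] be odd and N a positive integer. The map Φ_m sending a residue class f mod t^N in F_2[t]/(t^N) to the first N terms (p_0, ..., p_{N-1}) of the parity sequence of f under the mx+1 map T is well defined and is a bijection from F_2[t]/(t^N) onto {0,1}^N. -/

import Mathlib

open Polynomial

/-- The `mx+1` map on `𝔽₂[t]`. -/
noncomputable def Tmap (m f : Polynomial (ZMod 2)) : Polynomial (ZMod 2) :=
  if f.eval 0 = 0 then f /ₘ X else (m * f + 1) /ₘ X

lemma X_mul_divByMonic (f : Polynomial (ZMod 2)) :
    X * (f /ₘ X) = f - C (f.eval 0) := by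
  have h := modByMonic_add_div f (X : Polynomial (ZMod 2))
  rw [modByMonic_X] at h
  linear_combination h

lemma X_mul_Tmap (m f : Polynomial (ZMod 2)) (hm : m.eval 0 = 1) :
    X * Tmap m f = if f.eval 0 = 0 then f else m * f + 1 := by
  unfold Tmap
  by_cases h : f.eval 0 = 0
  · rw [if_pos h, if_pos h, X_mul_divByMonic, h, map_zero, sub_zero]
  · have h1 : f.eval 0 = 1 := by
      revert h; generalize f.eval 0 = x; revert x; decide
    have h2 : (m * f + 1).eval 0 = 0 := by simp [hm, h1]; decide
    rw [if_neg h, if_neg h, X_mul_divByMonic, h2, map_zero, sub_zero]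

lemma eval0_eq_of_dvd {f g : Polynomial (ZMod 2)} {n : ℕ} (hn : 1 ≤ n)
    (h : X ^ n ∣ f - g) : f.eval 0 = g.eval 0 := by
  obtain ⟨c, hc⟩ := h
  have := congrArg (Polynomial.eval 0) hc
  simp [zero_pow (by omega : n ≠ 0)] at this
  linear_combination this

lemma Tmap_dvd_step (m : Polynomial (ZMod 2)) (hm : m.eval 0 = 1)
    {f g : Polynomial (ZMod 2)} {n : ℕ} (h : X ^ (n + 1) ∣ f - g) :
    X ^ n ∣ Tmap m f - Tmap m g := by
  obtain ⟨c, hc⟩ := h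
  have hev : f.eval 0 = g.eval 0 := eval0_eq_of_dvd (by omega) ⟨c, hc⟩
  have hX : (X : Polynomial (ZMod 2)) ≠ 0 := X_ne_zero
  by_cases h0 : f.eval 0 = 0
  · refine ⟨c, mul_left_cancel₀ hX ?_⟩
    rw [mul_sub, X_mul_Tmap m f hm, X_mul_Tmap m g hm, if_pos h0, if_pos (hev ▸ h0)]
    rw [hc]; ring
  · refine ⟨m * c, mul_left_cancel₀ hX ?_⟩
    rw [mul_sub, X_mul_Tmap m f hm, X_mul_Tmap m g hm, if_neg h0, if_neg (hev ▸ h0)]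
    have : m * f + 1 - (m * g + 1) = m * (f - g) := by ring
    rw [this, hc]; ring

lemma parity_eq_of_dvd (m : Polynomial (ZMod 2)) (hm : m.eval 0 = 1) :
    ∀ (k n : ℕ) (f g : Polynomial (ZMod 2)), k < n → X ^ n ∣ f - g →
      ((Tmap m)^[k] f).eval 0 = ((Tmap m)^[k] g).eval 0 := by
  intro k
  induction k with
  | zero => intro n f g hk h; exact eval0_eq_of_dvd (by omega) h
  | succ k ih =>
    intro n f g hk h
    rw [Function.iterate_succ_apply, Function.iterate_succ_apply]
    refine ih (n - 1) _ _ (by omega) ?_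
    have : n - 1 + 1 = n := by omega
    exact Tmap_dvd_step m hm (this ▸ h)

lemma dvd_of_parity_eq (m : Polynomial (ZMod 2)) (hm : m.eval 0 = 1) :
    ∀ (n : ℕ) (f g : Polynomial (ZMod 2)),
      (∀ k < n, ((Tmap m)^[k] f).eval 0 = ((Tmap m)^[k] g).eval 0) →
      X ^ n ∣ f - g := by
  intro n
  induction n with
  | zero => intro f g _; simpa using one_dvd _
  | succ n ih =>
    intro f g hpar
    have hev : f.eval 0 = g.eval 0 := by simpa using hpar 0 (by omega)
    have hT : X ^ n ∣ Tmap m f - Tmap m g := by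
      refine ih _ _ fun k hk => ?_
      have := hpar (k + 1) (by omega)
      simpa [Function.iterate_succ_apply] using this
    obtain ⟨c, hc⟩ := hT
    have hX : (X : Polynomial (ZMod 2)) ≠ 0 := X_ne_zero
    by_cases h0 : f.eval 0 = 0
    · refine ⟨c, ?_⟩
      have := congrArg (X * ·) hc
      rw [mul_sub, X_mul_Tmap m f hm, X_mul_Tmap m g hm, if_pos h0,
        if_pos (hev ▸ h0)] at this
      rw [this]; ring
    · have key : X ^ (n + 1) ∣ m * (f - g) := by
        refine ⟨c, ?_⟩
        have := congrArg (X * ·) hc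
        rw [mul_sub, X_mul_Tmap m f hm, X_mul_Tmap m g hm, if_neg h0,
          if_neg (hev ▸ h0)] at this
        have h2 : m * f + 1 - (m * g + 1) = m * (f - g) := by ring
        rw [h2] at this; rw [this]; ring
      have hcop : IsCoprime ((X : Polynomial (ZMod 2)) ^ (n + 1)) m := by
        refine IsCoprime.pow_left ?_
        refine (Polynomial.prime_X).coprime_iff_not_dvd.mpr ?_
        rw [Polynomial.X_dvd_iff]
        simp only [← Polynomial.coeff_zero_eq_eval_zero] at hm
        simp [hm]
      exact hcop.dvd_of_dvd_mul_left key

/-- For odd `m` and `N ≥ 1`, the map sending a residue class `f mod t^N` to the first `N`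
terms of the parity sequence of `f` is well defined and is a bijection
`𝔽₂[t]/(t^N) → {0,1}^N`. -/
theorem stmt_8 (m : Polynomial (ZMod 2)) (hm : m.eval 0 = 1) (N : ℕ) (hN : 1 ≤ N) :
    ∃ Φ : (Polynomial (ZMod 2) ⧸ Ideal.span {(X : Polynomial (ZMod 2)) ^ N}) →
        (Fin N → ZMod 2),
      (∀ f : Polynomial (ZMod 2),
        Φ (Ideal.Quotient.mk _ f) = fun k : Fin N => ((Tmap m)^[(k : ℕ)] f).eval 0) ∧
      Function.Bijective Φ := by
  have hmem : ∀ p : Polynomial (ZMod 2), p ∈ Ideal.span {(X : Polynomial (ZMod 2)) ^ N} ↔ X ^ N ∣ p := fun p =>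
    Ideal.mem_span_singleton
  let F : Polynomial (ZMod 2) → Fin N → ZMod 2 :=
    fun f k => ((Tmap m)^[(k : ℕ)] f).eval 0
  have hF : ∀ a b : Polynomial (ZMod 2), Submodule.quotientRel (Ideal.span {(X : Polynomial (ZMod 2)) ^ N}) a b → F a = F b := by
    intro a b hab
    rw [Submodule.quotientRel_def] at hab
    funext k
    exact parity_eq_of_dvd m hm k N a b k.2 ((hmem _).mp hab)
  refine ⟨Quotient.lift F hF, fun f => rfl, ?_⟩
  have hinj : Function.Injective (Quotient.lift F hF) := by
    intro a b hab
    obtain ⟨f, rfl⟩ := Ideal.Quotient.mk_surjective a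
    obtain ⟨g, rfl⟩ := Ideal.Quotient.mk_surjective b
    rw [Ideal.Quotient.eq, hmem]
    refine dvd_of_parity_eq m hm N f g fun k hk => ?_
    exact congrFun hab ⟨k, hk⟩
  -- cardinality
  have hmonic : ((X : Polynomial (ZMod 2)) ^ N).Monic := monic_X_pow N
  let b : Module.Basis (Fin ((X : Polynomial (ZMod 2)) ^ N).natDegree) (ZMod 2)
      (Polynomial (ZMod 2) ⧸ Ideal.span {(X : Polynomial (ZMod 2)) ^ N}) :=
    AdjoinRoot.powerBasisAux' hmonic
  letI : Fintype (Polynomial (ZMod 2) ⧸ Ideal.span {(X : Polynomial (ZMod 2)) ^ N}) :=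
    Module.fintypeOfFintype b
  have hcard' : Fintype.card
      (Polynomial (ZMod 2) ⧸ Ideal.span {(X : Polynomial (ZMod 2)) ^ N}) = 2 ^ N := by
    rw [Module.card_fintype b, natDegree_X_pow, ZMod.card, Fintype.card_fin]
  rw [Fintype.bijective_iff_injective_and_card]
  refine ⟨hinj, ?_⟩
  rw [hcard']
  simp
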